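/- Let R ⊆ ℝⁿ be a compact set with nonempty interior. Then the volume of the image of R under the quotient map to the torus ℝⁿ/ℤⁿ equals the integral over R of 1/|R ∩ (x + ℤⁿ)| dx. -/

import Mathlib

open MeasureTheory
open scoped ENNReal

section aux
variable {n : ℕ}

/-- integer translate as a real vector -/
def vI (k : Fin n → ℤ) : Fin n → ℝ := fun i => (k i : ℝ)

/-- counting function as an ENNReal tsum -/
noncomputable def Ncnt (R : Set (Fin n → ℝ)) (x : Fin n → ℝ) : ℝ≥0∞ :=
  ∑' k : Fin n → ℤ, R.indicator 1 (x + vI k)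

lemma measurable_Ncnt (R : Set (Fin n → ℝ)) (hR : MeasurableSet R) :
    Measurable (Ncnt R) := by
  apply Measurable.ennreal_tsum
  intro k
  exact (measurable_const.indicator hR).comp (measurable_id.add_const (vI k))

/-- the set of integer vectors translating x into R -/
def Kset (R : Set (Fin n → ℝ)) (x : Fin n → ℝ) : Set (Fin n → ℤ) :=
  {k | x + vI k ∈ R}

lemma Kset_finite (R : Set (Fin n → ℝ)) (hR : IsCompact R) (x : Fin n → ℝ) :
    (Kset R x).Finite := by
  obtain ⟨C, hC⟩ := hR.isBounded.subset_closedBall 0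
  have : Kset R x ⊆ Set.univ.pi fun i => Set.Icc (⌈-(C + ‖x‖)⌉) (⌊C + ‖x‖⌋) := by
    intro k hk i _
    have hmem : x + vI k ∈ Metric.closedBall 0 C := hC hk
    rw [Metric.mem_closedBall, dist_zero_right] at hmem
    have h1 : |x i + (k i : ℝ)| ≤ C := le_trans (by simpa [vI] using norm_le_pi_norm (x + vI k) i) hmem
    have h2 : |(k i : ℝ)| ≤ C + ‖x‖ := by
      have := abs_sub_abs_le_abs_sub ((k i : ℝ)) (-(x i))
      have hx : |x i| ≤ ‖x‖ := by simpa using norm_le_pi_norm x i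
      have : |(k i : ℝ)| ≤ |x i + k i| + |x i| := by
        have := abs_add_le (x i + k i) (-(x i)); simpa [add_comm] using this
      linarith
    rw [abs_le] at h2
    constructor
    · exact_mod_cast Int.ceil_le.mpr h2.1
    · exact_mod_cast Int.le_floor.mpr h2.2
  exact Set.Finite.subset (Set.Finite.pi fun i => Set.finite_Icc _ _) this

lemma Ncnt_eq_card (R : Set (Fin n → ℝ)) (hR : IsCompact R) (x : Fin n → ℝ) :
    Ncnt R x = (Nat.card (Kset R x) : ℝ≥0∞) := by
  have hfin := Kset_finite R hR x
  have : Ncnt R x = ∑' k : Fin n → ℤ, (Kset R x).indicator 1 k := by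
    unfold Ncnt
    apply tsum_congr; intro k
    by_cases h : k ∈ Kset R x
    · have h' : x + vI k ∈ R := h
      simp [Set.indicator_of_mem h, Set.indicator_of_mem h']
    · have : x + vI k ∉ R := h
      simp [Set.indicator_of_notMem h, Set.indicator_of_notMem this]
  rw [this, ← tsum_subtype]
  have := hfin.fintype
  rw [tsum_fintype]
  simp [Finset.card_univ, Nat.card_eq_fintype_card]

lemma card_inter_eq (R : Set (Fin n → ℝ)) (x : Fin n → ℝ) :
    Nat.card ↥(R ∩ {y : Fin n → ℝ | ∀ i, ∃ m : ℤ, y i - x i = (m : ℝ)}) =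
      Nat.card (Kset R x) := by
  apply Nat.card_congr
  refine ⟨fun y => ⟨fun i => ⌊(y : Fin n → ℝ) i - x i⌋, ?_⟩,
          fun k => ⟨x + vI k, ?_, fun i => ⟨(k : Fin n → ℤ) i, by simp [vI]⟩⟩, ?_, ?_⟩
  · obtain ⟨y, hy1, hy2⟩ := y
    have : x + vI (fun i => ⌊y i - x i⌋) = y := by
      funext i
      obtain ⟨m, hm⟩ := hy2 i
      simp only [Pi.add_apply, vI, hm, Int.floor_intCast]
      linarith
    simpa [Kset, this] using hy1
  · exact k.2
  · rintro ⟨y, hy1, hy2⟩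
    ext i
    simp only [vI, Pi.add_apply]
    obtain ⟨m, hm⟩ := hy2 i
    simp [hm, Int.floor_intCast]; linarith
  · rintro ⟨k, hk⟩
    ext i
    simp [vI]

end aux
section main
variable {n : ℕ}

def cube (k : Fin n → ℤ) : Set (Fin n → ℝ) :=
  Set.univ.pi fun i => Set.Ico (k i : ℝ) ((k i : ℝ) + 1)

lemma measurableSet_cube (k : Fin n → ℤ) : MeasurableSet (cube k) :=
  MeasurableSet.univ_pi fun i => measurableSet_Ico

lemma mem_cube_iff (k : Fin n → ℤ) (x : Fin n → ℝ) :
    x ∈ cube k ↔ ∀ i, ⌊x i⌋ = k i := by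
  simp only [cube, Set.mem_pi, Set.mem_univ, forall_true_left, Set.mem_Ico]
  constructor
  · intro h i
    exact Int.floor_eq_iff.mpr ⟨(h i).1, by exact_mod_cast (h i).2⟩
  · intro h i
    have := Int.floor_eq_iff.mp (h i)
    exact ⟨this.1, by exact_mod_cast this.2⟩

lemma iUnion_cube : (⋃ k : Fin n → ℤ, cube k) = Set.univ := by
  ext x
  simp only [Set.mem_iUnion, Set.mem_univ, iff_true]
  exact ⟨fun i => ⌊x i⌋, (mem_cube_iff _ _).mpr fun i => rfl⟩

lemma cube_disjoint : Pairwise (Function.onFun Disjoint fun k : Fin n → ℤ => cube k) := by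
  intro k k' hne
  rw [Function.onFun, Set.disjoint_left]
  intro x hx hx'
  exact hne (funext fun i => ((mem_cube_iff k x).mp hx i).symm.trans ((mem_cube_iff k' x).mp hx' i))

lemma Ncnt_translate (R : Set (Fin n → ℝ)) (x : Fin n → ℝ) (k0 : Fin n → ℤ) :
    Ncnt R (x + vI k0) = Ncnt R x := by
  unfold Ncnt
  conv_rhs => rw [← Equiv.tsum_eq (Equiv.addLeft k0)]
  apply tsum_congr
  intro k
  congr 1
  funext i
  simp [vI, Equiv.addLeft]
  ring

lemma setLIntegral_translate (G : (Fin n → ℝ) → ℝ≥0∞) (hG : Measurable G)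
    (v : Fin n → ℝ) (A : Set (Fin n → ℝ)) (hA : MeasurableSet A) :
    ∫⁻ x in A, G x = ∫⁻ x in (fun x => x + v) ⁻¹' A, G (x + v) := by
  conv_lhs => rw [← map_add_right_eq_self volume v]
  rw [Measure.restrict_map (measurable_add_const v) hA,
    lintegral_map hG (measurable_add_const v)]

lemma preimage_cube (R : Set (Fin n → ℝ)) (k : Fin n → ℤ) :
    (fun x => x + vI k) ⁻¹' (R ∩ cube k) = {x | x + vI k ∈ R} ∩ cube 0 := by
  ext x
  simp only [Set.mem_preimage, Set.mem_inter_iff, Set.mem_setOf_eq, mem_cube_iff]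
  constructor
  · rintro ⟨h1, h2⟩
    refine ⟨h1, fun i => ?_⟩
    have := h2 i
    simp only [Pi.add_apply, vI] at this
    have : ⌊x i⌋ = 0 := by
      have h3 := Int.floor_add_intCast (x i) (k i)
      omega
    simpa using this
  · rintro ⟨h1, h2⟩
    refine ⟨h1, fun i => ?_⟩
    have := h2 i
    simp only [Pi.zero_apply] at this
    have h3 := Int.floor_add_intCast (x i) (k i)
    simp only [Pi.add_apply, vI]
    omega

lemma Ncnt_ne_zero_iff (R : Set (Fin n → ℝ)) (x : Fin n → ℝ) :
    Ncnt R x ≠ 0 ↔ ∃ k : Fin n → ℤ, x + vI k ∈ R := by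
  unfold Ncnt
  rw [Ne, ENNReal.tsum_eq_zero]
  simp only [not_forall]
  constructor
  · rintro ⟨k, hk⟩
    refine ⟨k, ?_⟩
    by_contra h
    exact hk (Set.indicator_of_notMem h 1)
  · rintro ⟨k, hk⟩
    exact ⟨k, by simp [Set.indicator_of_mem hk]⟩

lemma image_fract_eq (R : Set (Fin n → ℝ)) :
    (fun x i => Int.fract (x i)) '' R = cube 0 ∩ {x | Ncnt R x ≠ 0} := by
  ext x
  simp only [Set.mem_image, Set.mem_inter_iff, Set.mem_setOf_eq, Ncnt_ne_zero_iff]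
  constructor
  · rintro ⟨y, hy, rfl⟩
    constructor
    · rw [mem_cube_iff]
      intro i
      simp [Int.floor_fract]
    · refine ⟨fun i => ⌊y i⌋, ?_⟩
      have : (fun i => Int.fract (y i)) + vI (fun i => ⌊y i⌋) = y := by
        funext i
        simp only [Pi.add_apply, vI, Int.fract]
        ring
      rwa [this]
  · rintro ⟨h1, k, hk⟩
    refine ⟨x + vI k, hk, ?_⟩
    funext i
    have hx := (mem_cube_iff _ _).mp h1 i
    simp only [Pi.zero_apply] at hx
    simp only [Pi.add_apply, vI, Int.fract_add_intCast]
    rw [Int.fract_eq_self]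
    constructor
    · have := Int.floor_le (x i); rw [hx] at this; simpa using this
    · have := Int.lt_floor_add_one (x i); rw [hx] at this; simpa using this

end main
theorem stmt0 (n : ℕ) (R : Set (Fin n → ℝ)) (hR : IsCompact R)
    (hint : (interior R).Nonempty) :
    volume ((fun x i => Int.fract (x i)) '' R) =
      ∫⁻ x in R,
        ((Nat.card ↥(R ∩ {y : Fin n → ℝ | ∀ i, ∃ m : ℤ, y i - x i = (m : ℝ)}) : ℝ≥0∞))⁻¹ := by
  have hRm : MeasurableSet R := hR.isClosed.measurableSet
  set G : (Fin n → ℝ) → ℝ≥0∞ := fun x => (Ncnt R x)⁻¹ with hGdef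
  have hG : Measurable G := (measurable_Ncnt R hRm).inv
  have hntop : ∀ x, Ncnt R x ≠ ⊤ := by
    intro x; rw [Ncnt_eq_card R hR x]; exact ENNReal.natCast_ne_top _
  have hS : MeasurableSet {x : Fin n → ℝ | Ncnt R x ≠ 0} :=
    (measurable_Ncnt R hRm) (measurableSet_singleton 0).compl
  have hAk : ∀ k : Fin n → ℤ, MeasurableSet {x : Fin n → ℝ | x + vI k ∈ R} := by
    intro k
    exact (measurable_add_const (vI k)) hRm
  -- the RHS equals the integral of G
  have hRHS : (∫⁻ x in R,
      ((Nat.card ↥(R ∩ {y : Fin n → ℝ | ∀ i, ∃ m : ℤ, y i - x i = (m : ℝ)}) : ℝ≥0∞))⁻¹) =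
      ∫⁻ x in R, G x := by
    apply lintegral_congr
    intro x
    rw [hGdef]
    congr 1
    rw [Ncnt_eq_card R hR x, card_inter_eq R x]
  rw [hRHS]
  -- now compute the integral of G over R by splitting into cubes
  have hsplit : (∫⁻ x in R, G x) = ∑' k : Fin n → ℤ, ∫⁻ x in R ∩ cube k, G x := by
    have hU : R = ⋃ k : Fin n → ℤ, (R ∩ cube k) := by
      rw [← Set.inter_iUnion, iUnion_cube, Set.inter_univ]
    conv_lhs => rw [hU]
    exact lintegral_iUnion (fun k => hRm.inter (measurableSet_cube k))
      (fun k k' h => ((cube_disjoint h).mono Set.inter_subset_right Set.inter_subset_right)) G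
  have htrans : ∀ k : Fin n → ℤ, (∫⁻ x in R ∩ cube k, G x) =
      ∫⁻ x in cube 0, ({x : Fin n → ℝ | x + vI k ∈ R}).indicator G x := by
    intro k
    rw [setLIntegral_translate G hG (vI k) _ (hRm.inter (measurableSet_cube k)),
      preimage_cube]
    have : ∀ x, G (x + vI k) = G x := by
      intro x; simp only [hGdef, Ncnt_translate]
    calc ∫⁻ x in {x : Fin n → ℝ | x + vI k ∈ R} ∩ cube 0, G (x + vI k)
        = ∫⁻ x in {x : Fin n → ℝ | x + vI k ∈ R} ∩ cube 0, G x :=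
          lintegral_congr fun x => this x
      _ = ∫⁻ x in cube 0, ({x : Fin n → ℝ | x + vI k ∈ R}).indicator G x := by
          rw [lintegral_indicator (hAk k), Measure.restrict_restrict (hAk k)]
  rw [hsplit]
  simp only [htrans]
  rw [← lintegral_tsum (fun k => ((hG.indicator (hAk k)).aemeasurable))]
  have hpt : ∀ x : Fin n → ℝ,
      (∑' k : Fin n → ℤ, ({x : Fin n → ℝ | x + vI k ∈ R}).indicator G x) =
      ({x : Fin n → ℝ | Ncnt R x ≠ 0}).indicator 1 x := by
    intro x
    have h1 : ∀ k : Fin n → ℤ, ({x : Fin n → ℝ | x + vI k ∈ R}).indicator G x =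
        R.indicator 1 (x + vI k) * G x := by
      intro k
      by_cases h : x + vI k ∈ R
      · simp [Set.indicator_apply, h]
      · simp [Set.indicator_apply, h]
    simp only [h1]
    rw [ENNReal.tsum_mul_right]
    have h2 : (∑' k : Fin n → ℤ, R.indicator 1 (x + vI k)) = Ncnt R x := rfl
    rw [h2]
    by_cases h : Ncnt R x = 0
    · simp [hGdef, h, Set.indicator_apply]
    · have hone : Ncnt R x * G x = 1 := by
        simp only [hGdef]
        exact ENNReal.mul_inv_cancel h (hntop x)
      rw [hone, Set.indicator_apply]
      simp [h]
  rw [lintegral_congr hpt]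
  rw [lintegral_indicator_one hS, Measure.restrict_apply hS, image_fract_eq R,
    Set.inter_comm]
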